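/- Let {A^(j)} and {B^(j)} be projective matrix systems over the same sequence of finite nonempty level sets (Br_j) with Br_0 = {v_0}. Set L_j = √(#Br_j) · max_{w ∈ Br_j} ((A^(1) A^(2) ⋯ A^(j))_{v_0,w})^{-1}. Suppose ε_k ∈ (0,1) for all k and there is N ∈ ℕ such that ε_k ≤ 2^{-k} (L_k ∏_{j=1}^{k-1} (‖A^(j)‖ + 1))^{-1} for all k ≥ N; suppose (B^(1) B^(2) ⋯ B^(j))_{v_0,w} ≥ (A^(1) A^(2) ⋯ A^(j))_{v_0,w} for all w ∈ Br_j and all j ≥ 1; and suppose ‖A^(j) − B^(j)‖ ≤ ε_j for all j ≥ N. Then for every ψ = (ψ^j)_{j≥0} ∈ lim_j A^(j) and every j ≥ 1, the limit lim_{k→∞} B^(j) B^(j+1) ⋯ B^(j+k) ψ^{j+k} exists in ℝ^{Br_{j-1}}, and the sequence Tψ defined by (Tψ)^{j-1} equal to this limit belongs to lim_j B^(j). -/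

import Mathlib

open scoped BigOperators
noncomputable section

open Classical in
/-- The matrix product `(A^(1) A^(2) ⋯ A^(k))_{v,w}`; here `A n` is the matrix
`A^(n+1)` of a projective matrix system, from level `n` to level `n+1`. -/
def pathMat {L : ℕ → Type} [∀ n, Fintype (L n)]
    (A : ∀ n, L n → L (n+1) → ℝ) : ∀ k, L 0 → L k → ℝ
  | 0, v, w => if v = w then 1 else 0
  | (k+1), v, w => ∑ u, pathMat A k v u * A k u w

/-- The inverse limit `lim_j A^(j)` of a projective matrix system. -/
def InvLimit {L : ℕ → Type} [∀ n, Fintype (L n)]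
    (A : ∀ n, L n → L (n+1) → ℝ) : Set (∀ n, L n → ℝ) :=
  {ψ | (∀ n v, 0 ≤ ψ n v) ∧ ∀ n v, ψ n v = ∑ w, A n v w * ψ (n+1) w}

/-- A projective matrix system: nonnegative entries and
`(A^(1) ⋯ A^(k))_{v₀,w} ≠ 0` for all `k` and `w`. -/
def IsProjSystem {L : ℕ → Type} [∀ n, Fintype (L n)] (v0 : L 0)
    (A : ∀ n, L n → L (n+1) → ℝ) : Prop :=
  (∀ n v w, 0 ≤ A n v w) ∧ ∀ k (w : L k), pathMat A k v0 w ≠ 0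

/-- The Euclidean (`ℓ²`) norm of a vector. -/
def _root_.enorm {X : Type} [Fintype X] (ψ : X → ℝ) : ℝ := Real.sqrt (∑ x, ψ x ^ 2)

/-- Operator norm of a matrix with respect to the Euclidean norms. -/
def opNorm {X Y : Type} [Fintype X] [Fintype Y] (M : X → Y → ℝ) : ℝ :=
  ⨆ ψ : {ψ : Y → ℝ // _root_.enorm ψ ≤ 1}, _root_.enorm fun x => ∑ y, M x y * ψ.val y

/-- `applyChain B n k ψ = B^(n+1) B^(n+2) ⋯ B^(n+k) ψ` for `ψ ∈ ℝ^{Br_{n+k}}`. -/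
def applyChain {L : ℕ → Type} [∀ n, Fintype (L n)]
    (B : ∀ n, L n → L (n+1) → ℝ) (n : ℕ) : ∀ k, (L (n+k) → ℝ) → (L n → ℝ)
  | 0, ψ => ψ
  | k+1, ψ => applyChain B n k fun v => ∑ w, B (n+k) v w * ψ w

/-- The constant `L_j = √(#Br_j) · max_w ((A^(1)⋯A^(j))_{v₀,w})⁻¹` of Lemma 5.2. -/
def Lconst {L : ℕ → Type} [∀ n, Fintype (L n)] (v0 : L 0)
    (A : ∀ n, L n → L (n+1) → ℝ) (j : ℕ) : ℝ :=
  Real.sqrt (Fintype.card (L j) : ℝ) * ⨆ w : L j, (pathMat A j v0 w)⁻¹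


variable {X Y : Type} [Fintype X] [Fintype Y]

lemma enorm_nonneg (ψ : X → ℝ) : 0 ≤ _root_.enorm ψ := Real.sqrt_nonneg _

lemma enorm_eq_norm (ψ : X → ℝ) : _root_.enorm ψ = ‖(WithLp.toLp 2 ψ : EuclideanSpace ℝ X)‖ := by
  rw [EuclideanSpace.norm_eq]
  unfold _root_.enorm
  congr 1
  refine Finset.sum_congr rfl fun x _ => ?_
  rw [Real.norm_eq_abs, sq_abs]

lemma enorm_add_le_real (f g : X → ℝ) : _root_.enorm (fun x => f x + g x) ≤ _root_.enorm f + _root_.enorm g := by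
  rw [enorm_eq_norm, enorm_eq_norm, enorm_eq_norm]
  exact norm_add_le (WithLp.toLp 2 f : EuclideanSpace ℝ X) (WithLp.toLp 2 g : EuclideanSpace ℝ X)

lemma enorm_neg_real (f : X → ℝ) : _root_.enorm (fun x => -f x) = _root_.enorm f := by
  unfold _root_.enorm; simp

lemma abs_le_enorm (ψ : X → ℝ) (x : X) : |ψ x| ≤ _root_.enorm ψ := by
  rw [← Real.sqrt_sq_eq_abs]
  exact Real.sqrt_le_sqrt (Finset.single_le_sum (f := fun x => ψ x ^ 2)
    (fun i _ => sq_nonneg _) (Finset.mem_univ x))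

lemma enorm_zero_real : _root_.enorm (fun _ : X => (0:ℝ)) = 0 := by unfold _root_.enorm; simp

lemma enorm_smul_real (a : ℝ) (ψ : X → ℝ) : _root_.enorm (fun x => a * ψ x) = |a| * _root_.enorm ψ := by
  unfold _root_.enorm
  rw [← Real.sqrt_sq_eq_abs, ← Real.sqrt_mul (sq_nonneg a)]
  congr 1
  rw [Finset.mul_sum]
  exact Finset.sum_congr rfl fun x _ => (mul_pow a (ψ x) 2)

lemma eq_zero_of_enorm_eq_zero {ψ : X → ℝ} (h : _root_.enorm ψ = 0) : ∀ x, ψ x = 0 := by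
  intro x
  have := abs_le_enorm ψ x
  rw [h] at this
  have := abs_nonneg (ψ x)
  nlinarith [abs_nonneg (ψ x), le_abs_self (ψ x), neg_abs_le (ψ x)]

lemma enorm_le_card_mul {ψ : X → ℝ} {c : ℝ} [Nonempty X] (h : ∀ x, |ψ x| ≤ c) :
    _root_.enorm ψ ≤ Real.sqrt (Fintype.card X : ℝ) * c := by
  have hc : 0 ≤ c := le_trans (abs_nonneg _) (h (Classical.arbitrary X))
  have : ∑ x, ψ x ^ 2 ≤ (Fintype.card X : ℝ) * c ^ 2 := by
    calc ∑ x, ψ x ^ 2 ≤ ∑ _x : X, c ^ 2 := by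
          refine Finset.sum_le_sum fun x _ => ?_
          rw [← sq_abs]; exact pow_le_pow_left₀ (abs_nonneg _) (h x) 2
      _ = (Fintype.card X : ℝ) * c ^ 2 := by simp [Finset.sum_const, nsmul_eq_mul]
  calc _root_.enorm ψ ≤ Real.sqrt ((Fintype.card X : ℝ) * c ^ 2) := Real.sqrt_le_sqrt this
    _ = Real.sqrt (Fintype.card X : ℝ) * c := by
        rw [Real.sqrt_mul (by positivity), Real.sqrt_sq hc]

lemma opNorm_bddAbove (M : X → Y → ℝ) :
    BddAbove (Set.range fun ψ : {ψ : Y → ℝ // _root_.enorm ψ ≤ 1} =>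
      _root_.enorm fun x => ∑ y, M x y * ψ.val y) := by
  refine ⟨Real.sqrt (∑ x, ∑ y, M x y ^ 2), ?_⟩
  rintro r ⟨ψ, rfl⟩
  have hψ : ∑ y, ψ.val y ^ 2 ≤ 1 := by
    have h1 := ψ.2
    have h0 : 0 ≤ ∑ y, ψ.val y ^ 2 := Finset.sum_nonneg fun y _ => sq_nonneg _
    have : Real.sqrt (∑ y, ψ.val y ^ 2) ≤ 1 := h1
    nlinarith [Real.sq_sqrt h0, Real.sqrt_nonneg (∑ y, ψ.val y ^ 2)]
  unfold _root_.enorm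
  refine Real.sqrt_le_sqrt (Finset.sum_le_sum fun x _ => ?_)
  calc (∑ y, M x y * ψ.val y) ^ 2 ≤ (∑ y, M x y ^ 2) * ∑ y, ψ.val y ^ 2 :=
        Finset.sum_mul_sq_le_sq_mul_sq _ _ _
    _ ≤ (∑ y, M x y ^ 2) * 1 := by
        refine mul_le_mul_of_nonneg_left hψ (Finset.sum_nonneg fun y _ => sq_nonneg _)
    _ = ∑ y, M x y ^ 2 := mul_one _

lemma opNorm_nonneg (M : X → Y → ℝ) : 0 ≤ opNorm M := by
  have h0 : _root_.enorm (fun _ : Y => (0:ℝ)) ≤ 1 := by rw [enorm_zero_real]; norm_num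
  refine le_trans (enorm_nonneg fun x => ∑ y, M x y * (0:ℝ)) ?_
  exact le_ciSup (opNorm_bddAbove M) ⟨fun _ => 0, h0⟩

lemma enorm_mulVec_le (M : X → Y → ℝ) (ψ : Y → ℝ) :
    _root_.enorm (fun x => ∑ y, M x y * ψ y) ≤ opNorm M * _root_.enorm ψ := by
  rcases eq_or_lt_of_le (enorm_nonneg ψ) with h0 | hpos
  · have hz := eq_zero_of_enorm_eq_zero h0.symm
    have : (fun x => ∑ y, M x y * ψ y) = fun _ : X => (0:ℝ) := by
      funext x; simp [hz]
    rw [this, enorm_zero_real, ← h0, mul_zero]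
  · set c := _root_.enorm ψ with hc
    set ψ' : Y → ℝ := fun y => c⁻¹ * ψ y with hψ'
    have hnorm' : _root_.enorm ψ' = 1 := by
      rw [hψ', enorm_smul_real, abs_of_pos (inv_pos.2 hpos), ← hc, inv_mul_cancel₀ hpos.ne']
    have hle : _root_.enorm (fun x => ∑ y, M x y * ψ' y) ≤ opNorm M :=
      le_ciSup (opNorm_bddAbove M) (⟨ψ', hnorm'.le⟩ : {ψ : Y → ℝ // _root_.enorm ψ ≤ 1})
    have heq : (fun x => ∑ y, M x y * ψ y) = fun x => c * ∑ y, M x y * ψ' y := by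
      funext x
      rw [Finset.mul_sum]
      refine Finset.sum_congr rfl fun y _ => ?_
      rw [hψ']; field_simp
    rw [heq, enorm_smul_real, abs_of_pos hpos]
    calc c * _root_.enorm (fun x => ∑ y, M x y * ψ' y) ≤ c * opNorm M :=
          mul_le_mul_of_nonneg_left hle hpos.le
      _ = opNorm M * c := mul_comm _ _

lemma opNorm_le_of_bound (M : X → Y → ℝ) {C : ℝ} (hC : 0 ≤ C)
    (h : ∀ ψ : Y → ℝ, _root_.enorm ψ ≤ 1 → _root_.enorm (fun x => ∑ y, M x y * ψ y) ≤ C) :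
    opNorm M ≤ C := by
  have : Nonempty {ψ : Y → ℝ // _root_.enorm ψ ≤ 1} := ⟨⟨fun _ => 0, by rw [enorm_zero_real]; norm_num⟩⟩
  exact ciSup_le fun ψ => h ψ.val ψ.2

lemma opNorm_B_le (A B : X → Y → ℝ) :
    opNorm B ≤ opNorm A + opNorm (fun v w => A v w - B v w) := by
  refine opNorm_le_of_bound B (add_nonneg (opNorm_nonneg A) (opNorm_nonneg _)) fun ψ hψ => ?_
  have key : (fun x => ∑ y, B x y * ψ y)
      = fun x => (∑ y, A x y * ψ y) + (-(∑ y, (A x y - B x y) * ψ y)) := by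
    funext x
    rw [← Finset.sum_neg_distrib, ← Finset.sum_add_distrib]
    exact Finset.sum_congr rfl fun y _ => by ring
  rw [key]
  calc _root_.enorm (fun x => (∑ y, A x y * ψ y) + (-(∑ y, (A x y - B x y) * ψ y)))
      ≤ _root_.enorm (fun x => ∑ y, A x y * ψ y) + _root_.enorm (fun x => -(∑ y, (A x y - B x y) * ψ y)) :=
        enorm_add_le_real _ _
    _ = _root_.enorm (fun x => ∑ y, A x y * ψ y) + _root_.enorm (fun x => ∑ y, (A x y - B x y) * ψ y) := by
        rw [enorm_neg_real]
    _ ≤ opNorm A * _root_.enorm ψ + opNorm (fun v w => A v w - B v w) * _root_.enorm ψ := by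
        gcongr <;> [exact enorm_mulVec_le _ _; exact enorm_mulVec_le _ _]
    _ ≤ opNorm A * 1 + opNorm (fun v w => A v w - B v w) * 1 := by
        gcongr <;> first | exact opNorm_nonneg _ | exact hψ
    _ = opNorm A + opNorm (fun v w => A v w - B v w) := by ring

section Chains
variable {L : ℕ → Type} [∀ n, Fintype (L n)]

lemma pathMat_nonneg {A : ∀ n, L n → L (n+1) → ℝ} (hA : ∀ n v w, 0 ≤ A n v w)
    (v0 : L 0) : ∀ k (w : L k), 0 ≤ pathMat A k v0 w := by
  intro k
  induction k with
  | zero => intro w; unfold pathMat; split <;> norm_num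
  | succ k ih =>
    intro w
    unfold pathMat
    exact Finset.sum_nonneg fun u _ => mul_nonneg (ih u) (hA k u w)

lemma pathMat_pos {v0 : L 0} {A : ∀ n, L n → L (n+1) → ℝ} (hA : IsProjSystem v0 A)
    (k : ℕ) (w : L k) : 0 < pathMat A k v0 w :=
  lt_of_le_of_ne (pathMat_nonneg hA.1 v0 k w) (Ne.symm (hA.2 k w))

lemma Lconst_pos [∀ n, Nonempty (L n)] {v0 : L 0} {A : ∀ n, L n → L (n+1) → ℝ}
    (hA : IsProjSystem v0 A) (j : ℕ) : 0 < Lconst v0 A j := by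
  unfold Lconst
  have h1 : (0:ℝ) < Real.sqrt (Fintype.card (L j) : ℝ) := by
    have := Fintype.card_pos (α := L j)
    positivity
  refine mul_pos h1 ?_
  obtain ⟨w⟩ := ‹∀ n, Nonempty (L n)› j
  calc (0:ℝ) < (pathMat A j v0 w)⁻¹ := inv_pos.2 (pathMat_pos hA j w)
    _ ≤ _ := le_ciSup (f := fun w : L j => (pathMat A j v0 w)⁻¹)
      (Set.Finite.bddAbove (Set.finite_range _)) w

lemma psi_sum_formula {v0 : L 0} (hsing : ∀ v : L 0, v = v0)
    {A : ∀ n, L n → L (n+1) → ℝ} {ψ : ∀ n, L n → ℝ} (hψ : ψ ∈ InvLimit A) :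
    ∀ k, ψ 0 v0 = ∑ w, pathMat A k v0 w * ψ k w := by
  intro k
  induction k with
  | zero =>
    rw [Fintype.sum_eq_single v0]
    · unfold pathMat; simp
    · intro w hw; exact absurd (hsing w) hw
  | succ k ih =>
    calc ψ 0 v0 = ∑ u, pathMat A k v0 u * ψ k u := ih
      _ = ∑ u, pathMat A k v0 u * ∑ w, A k u w * ψ (k+1) w :=
          Finset.sum_congr rfl fun u _ => by rw [← hψ.2 k u]
      _ = ∑ u, ∑ w, pathMat A k v0 u * (A k u w * ψ (k+1) w) := by
          refine Finset.sum_congr rfl fun u _ => Finset.mul_sum _ _ _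
      _ = ∑ w, ∑ u, pathMat A k v0 u * (A k u w * ψ (k+1) w) := Finset.sum_comm
      _ = ∑ w, pathMat A (k+1) v0 w * ψ (k+1) w := by
          refine Finset.sum_congr rfl fun w _ => ?_
          show _ = (∑ u, pathMat A k v0 u * A k u w) * ψ (k+1) w
          rw [Finset.sum_mul]
          exact Finset.sum_congr rfl fun u _ => by ring

lemma psi_nonneg_v0 {A : ∀ n, L n → L (n+1) → ℝ} {ψ : ∀ n, L n → ℝ}
    (hψ : ψ ∈ InvLimit A) (v0 : L 0) : 0 ≤ ψ 0 v0 := hψ.1 0 v0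

lemma enorm_psi_le [∀ n, Nonempty (L n)] {v0 : L 0} (hsing : ∀ v : L 0, v = v0)
    {A : ∀ n, L n → L (n+1) → ℝ} (hA : IsProjSystem v0 A)
    {ψ : ∀ n, L n → ℝ} (hψ : ψ ∈ InvLimit A) (k : ℕ) :
    _root_.enorm (ψ k) ≤ Lconst v0 A k * ψ 0 v0 := by
  have hβ : 0 ≤ ψ 0 v0 := hψ.1 0 v0
  have hbound : ∀ w : L k, |ψ k w| ≤ (⨆ w : L k, (pathMat A k v0 w)⁻¹) * ψ 0 v0 := by
    intro w
    have hpos := pathMat_pos hA k w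
    have h1 : pathMat A k v0 w * ψ k w ≤ ψ 0 v0 := by
      rw [psi_sum_formula hsing hψ k]
      exact Finset.single_le_sum (f := fun w => pathMat A k v0 w * ψ k w)
        (fun u _ => mul_nonneg (pathMat_nonneg hA.1 v0 k u) (hψ.1 k u)) (Finset.mem_univ w)
    have h2 : ψ k w ≤ (pathMat A k v0 w)⁻¹ * ψ 0 v0 := by
      calc ψ k w = (pathMat A k v0 w * ψ k w) / pathMat A k v0 w := by
            field_simp
        _ ≤ ψ 0 v0 / pathMat A k v0 w := by gcongr
        _ = (pathMat A k v0 w)⁻¹ * ψ 0 v0 := by rw [div_eq_inv_mul]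
    rw [abs_of_nonneg (hψ.1 k w)]
    refine le_trans h2 ?_
    refine mul_le_mul_of_nonneg_right ?_ hβ
    exact le_ciSup (f := fun w : L k => (pathMat A k v0 w)⁻¹)
      (Set.Finite.bddAbove (Set.finite_range _)) w
  calc _root_.enorm (ψ k) ≤ Real.sqrt (Fintype.card (L k) : ℝ) *
        ((⨆ w : L k, (pathMat A k v0 w)⁻¹) * ψ 0 v0) := enorm_le_card_mul hbound
    _ = Lconst v0 A k * ψ 0 v0 := by rw [Lconst, mul_assoc]

variable {B : ∀ n, L n → L (n+1) → ℝ}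

lemma applyChain_nonneg (hB : ∀ n v w, 0 ≤ B n v w) (n : ℕ) :
    ∀ k (f : L (n+k) → ℝ), (∀ w, 0 ≤ f w) → ∀ v, 0 ≤ applyChain B n k f v := by
  intro k
  induction k with
  | zero => intro f hf v; exact hf v
  | succ k ih =>
    intro f hf v
    exact ih _ (fun u => Finset.sum_nonneg fun w _ => mul_nonneg (hB (n+k) u w) (hf w)) v

lemma applyChain_sub (n : ℕ) :
    ∀ k (f g : L (n+k) → ℝ),
      applyChain B n k (fun w => f w - g w)
        = fun v => applyChain B n k f v - applyChain B n k g v := by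
  intro k
  induction k with
  | zero => intro f g; rfl
  | succ k ih =>
    intro f g
    show applyChain B n k _ = _
    have : (fun v => ∑ w, B (n+k) v w * (f w - g w))
        = fun v => (∑ w, B (n+k) v w * f w) - (∑ w, B (n+k) v w * g w) := by
      funext v
      rw [← Finset.sum_sub_distrib]
      exact Finset.sum_congr rfl fun w _ => by ring
    rw [this, ih]
    rfl

lemma applyChain_enorm_le (n : ℕ) :
    ∀ k (f : L (n+k) → ℝ),
      _root_.enorm (applyChain B n k f)
        ≤ (∏ j ∈ Finset.range k, opNorm (B (n+j))) * _root_.enorm f := by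
  intro k
  induction k with
  | zero => intro f; rw [Finset.range_zero, Finset.prod_empty, one_mul]; exact le_of_eq rfl
  | succ k ih =>
    intro f
    calc _root_.enorm (applyChain B n (k+1) f)
        = _root_.enorm (applyChain B n k (fun v => ∑ w, B (n+k) v w * f w)) := rfl
      _ ≤ (∏ j ∈ Finset.range k, opNorm (B (n+j)))
            * _root_.enorm (fun v => ∑ w, B (n+k) v w * f w) := ih _
      _ ≤ (∏ j ∈ Finset.range k, opNorm (B (n+j))) * (opNorm (B (n+k)) * _root_.enorm f) := by
          refine mul_le_mul_of_nonneg_left (enorm_mulVec_le _ _) ?_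
          exact Finset.prod_nonneg fun j _ => opNorm_nonneg _
      _ = (∏ j ∈ Finset.range (k+1), opNorm (B (n+j))) * _root_.enorm f := by
          rw [Finset.prod_range_succ]; ring

lemma applyChain_peel (n : ℕ) :
    ∀ k (f : ∀ m, L m → ℝ),
      applyChain B n (k+1) (f (n+(k+1)))
        = fun v => ∑ w, B n v w * applyChain B (n+1) k (f ((n+1)+k)) w := by
  intro k
  induction k with
  | zero => intro f; rfl
  | succ k ih =>
    intro f
    have step : applyChain B n (k+2) (f (n+(k+2)))
        = applyChain B n (k+1) ((fun m (u : L m) => ∑ x, B m u x * f (m+1) x) (n+(k+1))) := rfl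
    rw [step, ih (fun m (u : L m) => ∑ x, B m u x * f (m+1) x)]
    rfl

lemma applyChain_psi {A : ∀ n, L n → L (n+1) → ℝ} {ψ : ∀ n, L n → ℝ}
    (hψ : ψ ∈ InvLimit A) (n : ℕ) :
    ∀ k, applyChain A n k (ψ (n+k)) = ψ n := by
  intro k
  induction k with
  | zero => rfl
  | succ k ih =>
    calc applyChain A n (k+1) (ψ (n+(k+1)))
        = applyChain A n k (fun v => ∑ w, A (n+k) v w * ψ (n+k+1) w) := rfl
      _ = applyChain A n k (ψ (n+k)) := by
          refine congrArg (applyChain A n k) (funext fun v => ?_)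
          exact (hψ.2 (n+k) v).symm
      _ = ψ n := ih

end Chains

section Main
variable {L : ℕ → Type} [∀ n, Fintype (L n)] [∀ n, Nonempty (L n)]

/-- Core _root_.enorm bound for one telescoping difference. -/
lemma diff_enorm_bound (v0 : L 0) (hsing : ∀ v : L 0, v = v0)
    {A B : ∀ n, L n → L (n+1) → ℝ}
    (hA : IsProjSystem v0 A)
    {ψ : ∀ n, L n → ℝ} (hψ : ψ ∈ InvLimit A)
    {ε : ℕ → ℝ} {N : ℕ}
    (hclose : ∀ n : ℕ, N ≤ n + 1 →
      opNorm (fun v w => A n v w - B n v w) ≤ ε n)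
    (hεpos : ∀ k, 0 ≤ ε k)
    (n k : ℕ) (hNk : N ≤ n + k + 1) :
    _root_.enorm (fun v => applyChain B n (k+1) (ψ (n+(k+1))) v - applyChain B n k (ψ (n+k)) v)
      ≤ (∏ j ∈ Finset.range k, opNorm (B (n+j)))
          * (ε (n+k) * (Lconst v0 A (n+k+1) * ψ 0 v0)) := by
  have hstep : (fun v => applyChain B n (k+1) (ψ (n+(k+1))) v - applyChain B n k (ψ (n+k)) v)
      = applyChain B n k
          (fun w => (∑ x, B (n+k) w x * ψ (n+k+1) x) - ψ (n+k) w) := by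
    rw [applyChain_sub]; rfl
  rw [hstep]
  have hD : _root_.enorm (fun w : L (n+k) => (∑ x, B (n+k) w x * ψ (n+k+1) x) - ψ (n+k) w)
      ≤ ε (n+k) * (Lconst v0 A (n+k+1) * ψ 0 v0) := by
    have hDeq : (fun w : L (n+k) => (∑ x, B (n+k) w x * ψ (n+k+1) x) - ψ (n+k) w)
        = fun w => -(∑ x, (A (n+k) w x - B (n+k) w x) * ψ (n+k+1) x) := by
      funext w
      rw [hψ.2 (n+k) w, ← Finset.sum_neg_distrib, ← Finset.sum_sub_distrib]
      exact Finset.sum_congr rfl fun x _ => by ring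
    rw [hDeq, enorm_neg_real]
    calc _root_.enorm (fun w : L (n+k) => ∑ x, (A (n+k) w x - B (n+k) w x) * ψ (n+k+1) x)
        ≤ opNorm (fun v w => A (n+k) v w - B (n+k) v w) * _root_.enorm (ψ (n+k+1)) :=
          enorm_mulVec_le _ _
      _ ≤ ε (n+k) * (Lconst v0 A (n+k+1) * ψ 0 v0) := by
          refine mul_le_mul (hclose (n+k) hNk) (enorm_psi_le hsing hA hψ (n+k+1))
            (enorm_nonneg _) (hεpos (n+k))
  calc _root_.enorm (applyChain B n k _)
      ≤ (∏ j ∈ Finset.range k, opNorm (B (n+j))) * _ := applyChain_enorm_le n k _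
    _ ≤ _ := by
        refine mul_le_mul_of_nonneg_left hD ?_
        exact Finset.prod_nonneg fun j _ => opNorm_nonneg _

lemma pi_norm_le_enorm {X : Type} [Fintype X] (f : X → ℝ) : ‖f‖ ≤ _root_.enorm f := by
  refine (pi_norm_le_iff_of_nonneg (enorm_nonneg f)).2 fun x => ?_
  rw [Real.norm_eq_abs]
  exact abs_le_enorm f x

lemma chain_tendsto (v0 : L 0) (hsing : ∀ v : L 0, v = v0)
    {A B : ∀ n, L n → L (n+1) → ℝ}
    (hA : IsProjSystem v0 A)
    {ψ : ∀ n, L n → ℝ} (hψ : ψ ∈ InvLimit A)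
    {ε : ℕ → ℝ} (hε : ∀ k, 0 < ε k ∧ ε k < 1) {N : ℕ}
    (hεsmall : ∀ n : ℕ, N ≤ n + 1 →
      ε n ≤ ((2 : ℝ) ^ (n + 1))⁻¹ *
        (Lconst v0 A (n + 1) * ∏ j ∈ Finset.range n, (opNorm (A j) + 1))⁻¹)
    (hclose : ∀ n : ℕ, N ≤ n + 1 →
      opNorm (fun v w => A n v w - B n v w) ≤ ε n)
    (n : ℕ) :
    ∃ F : L n → ℝ, Filter.Tendsto (fun k => applyChain B n k (ψ (n+k)))
      Filter.atTop (nhds F) := by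
  set g : ℕ → (L n → ℝ) := fun k => applyChain B n k (ψ (n+k)) with hg
  set d : ℕ → (L n → ℝ) := fun k => g (k+1) - g k with hd
  set M := max n N with hM
  set Q : ℕ → ℝ := fun m => ∏ j ∈ Finset.range m, (opNorm (A j) + 1) with hQdef
  set C₁ : ℝ := ∏ j ∈ Finset.Ico n M, opNorm (B j) with hC₁def
  have hβ : 0 ≤ ψ 0 v0 := hψ.1 0 v0
  have hC₁ : 0 ≤ C₁ := Finset.prod_nonneg fun j _ => opNorm_nonneg _
  have hone : ∀ (s : Finset ℕ), (1:ℝ) ≤ ∏ j ∈ s, (opNorm (A j) + 1) := by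
    intro s
    calc (1:ℝ) = ∏ _j ∈ s, (1:ℝ) := by simp
      _ ≤ ∏ j ∈ s, (opNorm (A j) + 1) :=
        Finset.prod_le_prod (fun j _ => by norm_num)
          (fun j _ => by linarith [opNorm_nonneg (A j)])
  have hQ1 : ∀ m, (1:ℝ) ≤ Q m := fun m => hone (Finset.range m)
  have hBle : ∀ j, N ≤ j + 1 → opNorm (B j) ≤ opNorm (A j) + 1 := by
    intro j hj
    calc opNorm (B j) ≤ opNorm (A j) + opNorm (fun v w => A j v w - B j v w) :=
          opNorm_B_le _ _
      _ ≤ opNorm (A j) + ε j := by linarith [hclose j hj]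
      _ ≤ opNorm (A j) + 1 := by linarith [(hε j).2]
  have hP : ∀ k, M ≤ n + k →
      (∏ j ∈ Finset.range k, opNorm (B (n+j))) ≤ C₁ * Q (n+k) := by
    intro k hk
    have h1 : (∏ j ∈ Finset.range k, opNorm (B (n+j)))
        = ∏ j ∈ Finset.Ico n (n+k), opNorm (B j) := by
      rw [Finset.prod_Ico_eq_prod_range]
      simp
    have hnM : n ≤ M := le_max_left n N
    have h2 : (∏ j ∈ Finset.Ico n (n+k), opNorm (B j))
        = C₁ * ∏ j ∈ Finset.Ico M (n+k), opNorm (B j) := by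
      rw [hC₁def, Finset.prod_Ico_consecutive _ hnM hk]
    have h3 : (∏ j ∈ Finset.Ico M (n+k), opNorm (B j))
        ≤ ∏ j ∈ Finset.Ico M (n+k), (opNorm (A j) + 1) := by
      refine Finset.prod_le_prod (fun j _ => opNorm_nonneg _) fun j hj => ?_
      refine hBle j ?_
      have := (Finset.mem_Ico.1 hj).1
      omega
    have h4 : (∏ j ∈ Finset.Ico M (n+k), (opNorm (A j) + 1)) ≤ Q (n+k) := by
      have hsplit : Q (n+k) = (∏ j ∈ Finset.Ico 0 M, (opNorm (A j) + 1))
          * ∏ j ∈ Finset.Ico M (n+k), (opNorm (A j) + 1) := by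
        simp only [hQdef]
        rw [Finset.range_eq_Ico, ← Finset.prod_Ico_consecutive _ (Nat.zero_le M) hk]
      rw [hsplit]
      have hA1 : (1:ℝ) ≤ ∏ j ∈ Finset.Ico 0 M, (opNorm (A j) + 1) := hone _
      have hpos : 0 ≤ ∏ j ∈ Finset.Ico M (n+k), (opNorm (A j) + 1) :=
        Finset.prod_nonneg fun j _ => by linarith [opNorm_nonneg (A j)]
      nlinarith
    calc (∏ j ∈ Finset.range k, opNorm (B (n+j)))
        = C₁ * ∏ j ∈ Finset.Ico M (n+k), opNorm (B j) := by rw [h1, h2]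
      _ ≤ C₁ * ∏ j ∈ Finset.Ico M (n+k), (opNorm (A j) + 1) :=
          mul_le_mul_of_nonneg_left h3 hC₁
      _ ≤ C₁ * Q (n+k) := mul_le_mul_of_nonneg_left h4 hC₁
  have hgeom : ∀ k, M ≤ n + k → ‖d k‖ ≤ (C₁ * ψ 0 v0) * (1/2)^k := by
    intro k hk
    have hNk : N ≤ n + k + 1 := by
      have := le_max_right n N; omega
    have hdk : d k = fun v => applyChain B n (k+1) (ψ (n+(k+1))) v
        - applyChain B n k (ψ (n+k)) v := rfl
    have hδ : _root_.enorm (d k) ≤ (∏ j ∈ Finset.range k, opNorm (B (n+j)))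
        * (ε (n+k) * (Lconst v0 A (n+k+1) * ψ 0 v0)) := by
      rw [hdk]
      exact diff_enorm_bound v0 hsing hA hψ hclose (fun k => (hε k).1.le) n k hNk
    have hLc : 0 < Lconst v0 A (n+k+1) := Lconst_pos hA _
    have hQpos : (0:ℝ) < Q (n+k) := lt_of_lt_of_le one_pos (hQ1 _)
    have hLQ : 0 < Lconst v0 A (n+k+1) * Q (n+k) := mul_pos hLc hQpos
    have hεQ : ε (n+k) * (Lconst v0 A (n+k+1) * Q (n+k)) ≤ ((2:ℝ)^(n+k+1))⁻¹ := by
      calc ε (n+k) * (Lconst v0 A (n+k+1) * Q (n+k))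
          ≤ (((2:ℝ)^(n+k+1))⁻¹ * (Lconst v0 A (n+k+1) * Q (n+k))⁻¹)
            * (Lconst v0 A (n+k+1) * Q (n+k)) :=
            mul_le_mul_of_nonneg_right (hεsmall (n+k) hNk) hLQ.le
        _ = ((2:ℝ)^(n+k+1))⁻¹ := by field_simp
    have hεQ2 : ε (n+k) * (Lconst v0 A (n+k+1) * Q (n+k)) ≤ (1/2:ℝ)^k := by
      refine le_trans hεQ ?_
      rw [one_div, inv_pow]
      refine inv_anti₀ (by positivity) ?_
      exact pow_le_pow_right₀ one_le_two (by omega)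
    calc ‖d k‖ ≤ _root_.enorm (d k) := pi_norm_le_enorm _
      _ ≤ (∏ j ∈ Finset.range k, opNorm (B (n+j)))
          * (ε (n+k) * (Lconst v0 A (n+k+1) * ψ 0 v0)) := hδ
      _ ≤ (C₁ * Q (n+k)) * (ε (n+k) * (Lconst v0 A (n+k+1) * ψ 0 v0)) := by
          refine mul_le_mul_of_nonneg_right (hP k hk) ?_
          exact mul_nonneg (hε (n+k)).1.le (mul_nonneg hLc.le hβ)
      _ = (C₁ * ψ 0 v0) * (ε (n+k) * (Lconst v0 A (n+k+1) * Q (n+k))) := by ring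
      _ ≤ (C₁ * ψ 0 v0) * (1/2:ℝ)^k :=
          mul_le_mul_of_nonneg_left hεQ2 (mul_nonneg hC₁ hβ)
  have hsum : Summable d := by
    refine Summable.of_norm_bounded_eventually_nat (g := fun k => (C₁ * ψ 0 v0) * (1/2)^k)
      ((summable_geometric_of_lt_one (by norm_num) (by norm_num)).mul_left _) ?_
    filter_upwards [Filter.eventually_ge_atTop M] with k hk
    exact hgeom k (le_trans hk (Nat.le_add_left k n))
  obtain ⟨S, hS⟩ := hsum
  refine ⟨g 0 + S, ?_⟩
  have h1 : Filter.Tendsto (fun k => ∑ i ∈ Finset.range k, d i)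
      Filter.atTop (nhds S) := hS.tendsto_sum_nat
  have h2 : ∀ k, g k = g 0 + ∑ i ∈ Finset.range k, d i := by
    intro k
    rw [hd]
    rw [Finset.sum_range_sub (f := g)]
    abel
  exact ((h1.const_add (g 0)).congr fun k => (h2 k).symm)

end Main

/-- Lemma 5.2, first part: under the stated assumptions, for every
`ψ ∈ lim_j A^(j)` the limits `(Tψ)^{j-1} = lim_k B^(j) ⋯ B^(j+k) ψ^{j+k}` exist
and define an element `Tψ` of `lim_j B^(j)`. -/
theorem stmt_13 {L : ℕ → Type} [∀ n, Fintype (L n)] [∀ n, Nonempty (L n)]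
    (v0 : L 0) (hsing : ∀ v : L 0, v = v0)
    (A B : ∀ n, L n → L (n+1) → ℝ)
    (hA : IsProjSystem v0 A) (hB : IsProjSystem v0 B)
    (ε : ℕ → ℝ) (hε : ∀ k, 0 < ε k ∧ ε k < 1)
    (N : ℕ)
    (hεsmall : ∀ n : ℕ, N ≤ n + 1 →
      ε n ≤ ((2 : ℝ) ^ (n + 1))⁻¹ *
        (Lconst v0 A (n + 1) * ∏ j ∈ Finset.range n, (opNorm (A j) + 1))⁻¹)
    (hBA : ∀ j : ℕ, ∀ w : L j, pathMat A j v0 w ≤ pathMat B j v0 w)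
    (hclose : ∀ n : ℕ, N ≤ n + 1 →
      opNorm (fun v w => A n v w - B n v w) ≤ ε n) :
    ∀ ψ ∈ InvLimit A, ∃ φ ∈ InvLimit B, ∀ n : ℕ,
      Filter.Tendsto (fun k => applyChain B n (k + 1) (ψ (n + (k + 1))))
        Filter.atTop (nhds (φ n)) := by
  intro ψ hψ
  have key : ∀ n, ∃ F : L n → ℝ, Filter.Tendsto (fun k => applyChain B n k (ψ (n+k)))
      Filter.atTop (nhds F) :=
    fun n => chain_tendsto v0 hsing hA hψ hε hεsmall hclose n
  choose φ hφ using key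
  have hφv : ∀ (n : ℕ) (v : L n), Filter.Tendsto (fun k => applyChain B n k (ψ (n+k)) v)
      Filter.atTop (nhds (φ n v)) :=
    fun n v => ((continuous_apply v).tendsto (φ n)).comp (hφ n)
  refine ⟨φ, ⟨?_, ?_⟩, ?_⟩
  · intro n v
    refine ge_of_tendsto' (hφv n v) fun k => ?_
    exact applyChain_nonneg hB.1 n k _ (fun w => hψ.1 (n+k) w) v
  · intro n v
    have hL : Filter.Tendsto (fun k => applyChain B n (k+1) (ψ (n+(k+1))) v)
        Filter.atTop (nhds (φ n v)) :=
      (hφv n v).comp (Filter.tendsto_add_atTop_nat 1)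
    have hR : Filter.Tendsto (fun k => ∑ w, B n v w * applyChain B (n+1) k (ψ ((n+1)+k)) w)
        Filter.atTop (nhds (∑ w, B n v w * φ (n+1) w)) :=
      tendsto_finset_sum _ fun w _ => (hφv (n+1) w).const_mul (B n v w)
    have heq : ∀ k, applyChain B n (k+1) (ψ (n+(k+1))) v
        = ∑ w, B n v w * applyChain B (n+1) k (ψ ((n+1)+k)) w := fun k =>
      congrFun (applyChain_peel n k ψ) v
    exact tendsto_nhds_unique (hL.congr heq) hR
  · intro n
    exact (hφ n).comp (Filter.tendsto_add_atTop_nat 1)
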